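/- Let G be a prime (P6, bull)-free graph containing an induced 5-cycle C with vertices c1,...,c5 (indices mod 5), and suppose some vertex x of G has no neighbor on C. Then there exists a neighbor d of x that has exactly two neighbors on C, and consequently G contains an induced copy of the graph G7 (the 5-cycle c1,...,c5 plus vertices d, x with edges d c_i, d c_{i+3}, d x for some i). -/

import Mathlib

open SimpleGraph

variable {V : Type*}

/-- The vertices `a b c d e` induce a bull in `G` (edges ab, bc, cd, be, ce). -/
def IsBull (G : SimpleGraph V) (a b c d e : V) : Prop :=
  a ≠ b ∧ a ≠ c ∧ a ≠ d ∧ a ≠ e ∧ b ≠ c ∧ b ≠ d ∧ b ≠ e ∧ c ≠ d ∧ c ≠ e ∧ d ≠ e ∧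
  G.Adj a b ∧ G.Adj b c ∧ G.Adj c d ∧ G.Adj b e ∧ G.Adj c e ∧
  ¬ G.Adj a c ∧ ¬ G.Adj a d ∧ ¬ G.Adj a e ∧ ¬ G.Adj b d ∧ ¬ G.Adj d e

/-- `G` contains no induced bull. -/
def BullFree (G : SimpleGraph V) : Prop := ∀ a b c d e : V, ¬ IsBull G a b c d e

/-- `G` contains no induced path on six vertices. -/
def P6Free (G : SimpleGraph V) : Prop :=
  ¬ ∃ p : Fin 6 → V, Function.Injective p ∧
      ∀ i j : Fin 6, G.Adj (p i) (p j) ↔ (i.val + 1 = j.val ∨ j.val + 1 = i.val)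

/-- `c` lists the vertices of an induced 5-cycle in `G` (indices mod 5). -/
def IsInducedC5 (G : SimpleGraph V) (c : Fin 5 → V) : Prop :=
  Function.Injective c ∧ ∀ i j : Fin 5, G.Adj (c i) (c j) ↔ (j = i + 1 ∨ i = j + 1)

/-- `S` is a homogeneous set in `G`. -/
def IsHomogeneous (G : SimpleGraph V) (S : Set V) : Prop :=
  ∀ v ∉ S, (∀ s ∈ S, G.Adj v s) ∨ (∀ s ∈ S, ¬ G.Adj v s)

/-- `S` is a proper homogeneous set: homogeneous, of size at least two, not all of `V`. -/
def IsProperHomogeneous (G : SimpleGraph V) (S : Set V) : Prop :=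
  IsHomogeneous G S ∧ (∃ a ∈ S, ∃ b ∈ S, a ≠ b) ∧ S ≠ Set.univ

/-- A graph is prime if it has no proper homogeneous set. -/
def IsPrimeGraph (G : SimpleGraph V) : Prop := ¬ ∃ S : Set V, IsProperHomogeneous G S

/-- Number of neighbors of `x` on the 5-cycle `c`. -/
def nbrCount (G : SimpleGraph V) [DecidableRel G.Adj] (c : Fin 5 → V) (x : V) : ℕ :=
  (Finset.univ.filter fun i : Fin 5 => G.Adj x (c i)).card

lemma bull_contra {G : SimpleGraph V} (hB : BullFree G) {a b c d e : V}
    (hac : a ≠ c) (had : a ≠ d) (hae : a ≠ e) (hbd : b ≠ d) (hde : d ≠ e)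
    (h1 : G.Adj a b) (h2 : G.Adj b c) (h3 : G.Adj c d) (h4 : G.Adj b e) (h5 : G.Adj c e)
    (n1 : ¬G.Adj a c) (n2 : ¬G.Adj a d) (n3 : ¬G.Adj a e) (n4 : ¬G.Adj b d)
    (n5 : ¬G.Adj d e) : False :=
  hB a b c d e ⟨h1.ne, hac, had, hae, h2.ne, hbd, h4.ne, h3.ne, h5.ne, hde,
    h1, h2, h3, h4, h5, n1, n2, n3, n4, n5⟩

lemma p6_contra {G : SimpleGraph V} (hP : P6Free G) {a b c d e f : V}
    (h1 : G.Adj a b) (h2 : G.Adj b c) (h3 : G.Adj c d) (h4 : G.Adj d e) (h5 : G.Adj e f)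
    (n02 : ¬G.Adj a c) (n03 : ¬G.Adj a d) (n04 : ¬G.Adj a e) (n05 : ¬G.Adj a f)
    (n13 : ¬G.Adj b d) (n14 : ¬G.Adj b e) (n15 : ¬G.Adj b f)
    (n24 : ¬G.Adj c e) (n25 : ¬G.Adj c f) (n35 : ¬G.Adj d f)
    (e02 : a ≠ c) (e03 : a ≠ d) (e04 : a ≠ e) (e05 : a ≠ f)
    (e13 : b ≠ d) (e14 : b ≠ e) (e15 : b ≠ f)
    (e24 : c ≠ e) (e25 : c ≠ f) (e35 : d ≠ f) : False := by
  apply hP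
  refine ⟨![a, b, c, d, e, f], ?_, ?_⟩
  · have e01 := h1.ne; have e12 := h2.ne; have e23 := h3.ne
    have e34 := h4.ne; have e45 := h5.ne
    intro i j hij
    fin_cases i <;> fin_cases j <;>
      first
        | rfl
        | exact absurd hij (by assumption)
        | exact absurd hij.symm (by assumption)
  · have s1 := h1.symm; have s2 := h2.symm; have s3 := h3.symm
    have s4 := h4.symm; have s5 := h5.symm
    have i0 := G.irrefl (v := a); have i1 := G.irrefl (v := b)
    have i2 := G.irrefl (v := c); have i3 := G.irrefl (v := d)
    have i4 := G.irrefl (v := e); have i5 := G.irrefl (v := f)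
    have m02 : ¬G.Adj c a := fun h => n02 h.symm
    have m03 : ¬G.Adj d a := fun h => n03 h.symm
    have m04 : ¬G.Adj e a := fun h => n04 h.symm
    have m05 : ¬G.Adj f a := fun h => n05 h.symm
    have m13 : ¬G.Adj d b := fun h => n13 h.symm
    have m14 : ¬G.Adj e b := fun h => n14 h.symm
    have m15 : ¬G.Adj f b := fun h => n15 h.symm
    have m24 : ¬G.Adj e c := fun h => n24 h.symm
    have m25 : ¬G.Adj f c := fun h => n25 h.symm
    have m35 : ¬G.Adj f d := fun h => n35 h.symm
    intro i j
    fin_cases i <;> fin_cases j <;>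
      first
        | exact iff_of_true (by assumption) (by decide)
        | exact iff_of_false (by assumption) (by decide)

section Helpers

variable {G : SimpleGraph V} {c : Fin 5 → V}

lemma cadj (hc : IsInducedC5 G c) (i : Fin 5) : G.Adj (c i) (c (i + 1)) :=
  (hc.2 i (i + 1)).mpr (Or.inl rfl)

lemma cnadj (hc : IsInducedC5 G c) {i j : Fin 5} (h1 : j ≠ i + 1) (h2 : i ≠ j + 1) :
    ¬G.Adj (c i) (c j) := fun h => ((hc.2 i j).mp h).elim h1 h2

lemma cne (hc : IsInducedC5 G c) {i j : Fin 5} (h : i ≠ j) : c i ≠ c j :=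
  fun e => h (hc.1 e)

lemma aneC (hc : IsInducedC5 G c) {u : V} (hu : ∀ i, ¬G.Adj u (c i)) (i : Fin 5) :
    u ≠ c i := fun e => hu (i + 1) (e ▸ cadj hc i)

/-- pattern with consecutive pair i,i+1 but missing i+4 is impossible (bull). -/
lemma patLB (hc : IsInducedC5 G c) (hB : BullFree G) {w v : V}
    (hw : ∀ i, ¬G.Adj w (c i)) (hwv : G.Adj w v) (i : Fin 5)
    (a1 : G.Adj v (c i)) (a2 : G.Adj v (c (i + 1))) (a3 : ¬G.Adj v (c (i + 4))) : False := by
  refine bull_contra hB (a := w) (b := v) (c := c i) (d := c (i + 4)) (e := c (i + 1))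
    (aneC hc hw i) (aneC hc hw (i + 4)) (aneC hc hw (i + 1)) ?_ ?_
    hwv a1 ?_ a2 (cadj hc i) (hw i) (hw (i + 4)) (hw (i + 1)) a3 ?_
  · intro e; rw [e] at hwv; exact hw (i + 4) hwv
  · exact cne hc ((by decide : ∀ k : Fin 5, k + 4 ≠ k + 1) i)
  · exact (hc.2 i (i + 4)).mpr (Or.inr ((by decide : ∀ k : Fin 5, k = (k + 4) + 1) i))
  · exact cnadj hc ((by decide : ∀ k : Fin 5, k + 1 ≠ (k + 4) + 1) i)
      ((by decide : ∀ k : Fin 5, k + 4 ≠ (k + 1) + 1) i)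

/-- pattern with a single isolated neighbor c i (next three missing) is impossible (P6). -/
lemma patLC (hc : IsInducedC5 G c) (hP : P6Free G) {w v : V}
    (hw : ∀ i, ¬G.Adj w (c i)) (hwv : G.Adj w v) (i : Fin 5)
    (a1 : G.Adj v (c i)) (n1 : ¬G.Adj v (c (i + 1))) (n2 : ¬G.Adj v (c (i + 2)))
    (n3 : ¬G.Adj v (c (i + 3))) : False := by
  refine p6_contra hP (a := w) (b := v) (c := c i) (d := c (i + 1)) (e := c (i + 2))
    (f := c (i + 3)) hwv a1 (cadj hc i) ?_ ?_
    (hw i) (hw (i + 1)) (hw (i + 2)) (hw (i + 3)) n1 n2 n3 ?_ ?_ ?_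
    (aneC hc hw i) (aneC hc hw (i + 1)) (aneC hc hw (i + 2)) (aneC hc hw (i + 3))
    ?_ ?_ ?_ ?_ ?_ ?_
  · have := cadj hc (i + 1); rwa [((by decide : ∀ k : Fin 5, k + 1 + 1 = k + 2) i)] at this
  · have := cadj hc (i + 2); rwa [((by decide : ∀ k : Fin 5, k + 2 + 1 = k + 3) i)] at this
  · exact cnadj hc ((by decide : ∀ k : Fin 5, k + 2 ≠ k + 1) i)
      ((by decide : ∀ k : Fin 5, k ≠ (k + 2) + 1) i)
  · exact cnadj hc ((by decide : ∀ k : Fin 5, k + 3 ≠ k + 1) i)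
      ((by decide : ∀ k : Fin 5, k ≠ (k + 3) + 1) i)
  · exact cnadj hc ((by decide : ∀ k : Fin 5, k + 3 ≠ (k + 1) + 1) i)
      ((by decide : ∀ k : Fin 5, k + 1 ≠ (k + 3) + 1) i)
  · intro e; rw [e] at hwv; exact hw (i + 1) hwv
  · intro e; rw [e] at hwv; exact hw (i + 2) hwv
  · intro e; rw [e] at hwv; exact hw (i + 3) hwv
  · exact cne hc ((by decide : ∀ k : Fin 5, k ≠ k + 2) i)
  · exact cne hc ((by decide : ∀ k : Fin 5, k ≠ k + 3) i)
  · exact cne hc ((by decide : ∀ k : Fin 5, k + 1 ≠ k + 3) i)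

open Fin.NatCast Fin.CommRing in
/-- a vertex with a neighbor on C and a non-neighbor on C has a "run end". -/
lemma mixRun (hc : IsInducedC5 G c) {t : V} {i₀ j₀ : Fin 5}
    (h1 : G.Adj t (c i₀)) (h2 : ¬G.Adj t (c j₀)) :
    ∃ i, G.Adj t (c i) ∧ ¬G.Adj t (c (i + 1))  := by
  by_contra hcon
  push_neg at hcon
  have step : ∀ k : ℕ, G.Adj t (c (i₀ + (k : Fin 5))) := by
    intro k
    induction k with
    | zero => simpa using h1
    | succ m ihm =>
        have := hcon _ ihm
        rwa [(by push_cast; ring : i₀ + ((m + 1 : ℕ) : Fin 5) = (i₀ + (m : Fin 5)) + 1)]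
  apply h2
  have := step (j₀ - i₀).val
  rwa [Fin.cast_val_eq_self, (by ring : i₀ + (j₀ - i₀) = j₀)] at this

/-- classification of C-neighborhood of a vertex v having a neighbor w anticomplete to C. -/
lemma classifyC (hc : IsInducedC5 G c) (hB : BullFree G) (hP : P6Free G) {w v : V}
    (hw : ∀ i, ¬G.Adj w (c i)) (hwv : G.Adj w v) :
    (∀ i, ¬G.Adj v (c i)) ∨ (∀ i, G.Adj v (c i)) ∨
      (∃ i, G.Adj v (c i) ∧ G.Adj v (c (i + 3)) ∧
        ∀ j, j ≠ i → j ≠ i + 3 → ¬G.Adj v (c j)) := by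
  by_cases hY : ∀ i, G.Adj v (c i)
  · exact Or.inr (Or.inl hY)
  by_cases hA : ∀ i, ¬G.Adj v (c i)
  · exact Or.inl hA
  push_neg at hY hA
  obtain ⟨j₀, hj₀⟩ := hY
  obtain ⟨i₀, hi₀⟩ := hA
  obtain ⟨i, hi, hi1⟩ := mixRun hc hi₀ hj₀
  by_cases h4 : G.Adj v (c (i + 4))
  · by_cases h3 : G.Adj v (c (i + 3))
    · by_cases h2 : G.Adj v (c (i + 2))
      · refine (patLB hc hB hw hwv (i + 2) h2 ?_ ?_).elim
        · rwa [((by decide : ∀ k : Fin 5, k + 2 + 1 = k + 3) i)]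
        · rwa [((by decide : ∀ k : Fin 5, k + 2 + 4 = k + 1) i)]
      · refine (patLB hc hB hw hwv (i + 3) h3 ?_ ?_).elim
        · rwa [((by decide : ∀ k : Fin 5, k + 3 + 1 = k + 4) i)]
        · rwa [((by decide : ∀ k : Fin 5, k + 3 + 4 = k + 2) i)]
    · refine (patLB hc hB hw hwv (i + 4) h4 ?_ ?_).elim
      · rwa [((by decide : ∀ k : Fin 5, k + 4 + 1 = k) i)]
      · rwa [((by decide : ∀ k : Fin 5, k + 4 + 4 = k + 3) i)]
  · by_cases h2 : G.Adj v (c (i + 2))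
    · by_cases h3 : G.Adj v (c (i + 3))
      · refine (patLB hc hB hw hwv (i + 2) h2 ?_ ?_).elim
        · rwa [((by decide : ∀ k : Fin 5, k + 2 + 1 = k + 3) i)]
        · rwa [((by decide : ∀ k : Fin 5, k + 2 + 4 = k + 1) i)]
      · refine Or.inr (Or.inr ⟨i + 2, h2, ?_, ?_⟩)
        · rwa [((by decide : ∀ k : Fin 5, k + 2 + 3 = k) i)]
        · intro j hj1 hj2
          rw [((by decide : ∀ k : Fin 5, k + 2 + 3 = k) i)] at hj2
          rcases (by decide : ∀ a b : Fin 5, a ≠ b + 2 → a ≠ b →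
              a = b + 1 ∨ a = b + 3 ∨ a = b + 4) j i hj1 hj2 with h | h | h
          · rw [h]; exact hi1
          · rw [h]; exact h3
          · rw [h]; exact h4
    · by_cases h3 : G.Adj v (c (i + 3))
      · refine Or.inr (Or.inr ⟨i, hi, h3, ?_⟩)
        intro j hj1 hj2
        rcases (by decide : ∀ a b : Fin 5, a ≠ b → a ≠ b + 3 →
            a = b + 1 ∨ a = b + 2 ∨ a = b + 4) j i hj1 hj2 with h | h | h
        · rw [h]; exact hi1
        · rw [h]; exact h2
        · rw [h]; exact h4
      · exact (patLC hc hP hw hwv i hi hi1 h2 h3).elim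

end Helpers

section MainDefs

/-- vertices reachable from `x` through vertices anticomplete to `C`. -/
def Fcomp (G : SimpleGraph V) (c : Fin 5 → V) (x : V) : V → Prop :=
  Relation.ReflTransGen (fun a b => G.Adj a b ∧ ∀ i, ¬G.Adj b (c i)) x

def NFr (G : SimpleGraph V) (c : Fin 5 → V) (x v : V) : Prop :=
  ¬Fcomp G c x v ∧ ∃ u, Fcomp G c x u ∧ G.Adj u v

def BadY (G : SimpleGraph V) (c : Fin 5 → V) (x v : V) : Prop :=
  (∀ i, G.Adj v (c i)) ∧ ∃ y, NFr G c x y ∧ ¬G.Adj y v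

def OkV (G : SimpleGraph V) (c : Fin 5 → V) (x v : V) : Prop :=
  ¬Fcomp G c x v ∧ ¬NFr G c x v ∧ ¬BadY G c x v

def WalkP (G : SimpleGraph V) (c : Fin 5 → V) (x : V) (n : ℕ) (p : ℕ → V) : Prop :=
  p 0 = c 0 ∧ (∀ k, k < n → G.Adj (p k) (p (k + 1))) ∧ ∀ k, k ≤ n → OkV G c x (p k)

variable {G : SimpleGraph V} {c : Fin 5 → V} {x : V}

lemma Fcomp_anti (hx0 : ∀ i, ¬G.Adj x (c i)) {v : V} (h : Fcomp G c x v) :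
    ∀ i, ¬G.Adj v (c i) := by
  induction h with
  | refl => exact hx0
  | tail _ h2 _ => exact h2.2

lemma neFOk {u s : V} (hu : Fcomp G c x u) (hs : OkV G c x s) : u ≠ s :=
  fun e => hs.1 (e ▸ hu)

lemma noadjFOk {u s : V} (hu : Fcomp G c x u) (hs : OkV G c x s) : ¬G.Adj u s :=
  fun h => hs.2.1 ⟨hs.1, u, hu, h⟩

lemma key3 (hc : IsInducedC5 G c) (hB : BullFree G) (hx0 : ∀ i, ¬G.Adj x (c i))
    {y u₁ : V} (hu₁F : Fcomp G c x u₁) (hu₁y : G.Adj u₁ y) (hyF : ¬Fcomp G c x y)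
    (hyY : ∀ i, G.Adj y (c i)) :
    ∀ n (p : ℕ → V), WalkP G c x n p → G.Adj y (p n) := by
  have hyNF : NFr G c x y := ⟨hyF, u₁, hu₁F, hu₁y⟩
  have hu₁A : ∀ i, ¬G.Adj u₁ (c i) := Fcomp_anti hx0 hu₁F
  intro n
  induction n using Nat.strong_induction_on with
  | _ n ih =>
    intro p hw
    by_contra hyt
    have hOkt : OkV G c x (p n) := hw.2.2 n le_rfl
    have hbd : y ≠ p n := fun e => hOkt.2.1 (e ▸ hyNF)
    by_cases hYt : ∀ i, G.Adj (p n) (c i)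
    · exact hOkt.2.2 ⟨hYt, y, hyNF, hyt⟩
    by_cases hAt : ∀ i, ¬G.Adj (p n) (c i)
    · have hn : n ≠ 0 := by
        intro e
        apply hAt 1
        rw [e, hw.1]
        exact cadj hc 0
      have hex : ∃ k, G.Adj (p k) (p n) ∧ k < n := by
        refine ⟨n - 1, ?_, by omega⟩
        have h := hw.2.1 (n - 1) (by omega)
        rwa [show n - 1 + 1 = n by omega] at h
      haveI := Classical.decPred fun k => G.Adj (p k) (p n) ∧ k < n
      obtain ⟨hradj, hrn⟩ := Nat.find_spec hex
      set r := Nat.find hex with hrdef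
      have hrpos : r ≠ 0 := by
        intro e
        rw [e, hw.1] at hradj
        exact hAt 0 hradj.symm
      have hminadj : ¬G.Adj (p (r - 1)) (p n) := by
        intro hadj
        exact Nat.find_min hex (show r - 1 < r by omega) ⟨hadj, by omega⟩
      have hwr : WalkP G c x r p :=
        ⟨hw.1, fun k hk => hw.2.1 k (by omega), fun k hk => hw.2.2 k (by omega)⟩
      have hwr1 : WalkP G c x (r - 1) p :=
        ⟨hw.1, fun k hk => hw.2.1 k (by omega), fun k hk => hw.2.2 k (by omega)⟩
      have ihr : G.Adj y (p r) := ih r hrn p hwr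
      have ihr1 : G.Adj y (p (r - 1)) := ih (r - 1) (by omega) p hwr1
      have hpr : G.Adj (p r) (p (r - 1)) := by
        have h := hw.2.1 (r - 1) (by omega)
        rw [show r - 1 + 1 = r by omega] at h
        exact h.symm
      exact bull_contra hB
        (neFOk hu₁F (hw.2.2 r (by omega)))
        (neFOk hu₁F hOkt)
        (neFOk hu₁F (hw.2.2 (r - 1) (by omega)))
        hbd
        (fun e => hyt (by rw [e]; exact ihr1))
        hu₁y ihr hradj ihr1 hpr
        (noadjFOk hu₁F (hw.2.2 r (by omega)))
        (noadjFOk hu₁F hOkt)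
        (noadjFOk hu₁F (hw.2.2 (r - 1) (by omega)))
        hyt
        (fun h => hminadj h.symm)
    · push_neg at hYt hAt
      obtain ⟨j₀, hj₀⟩ := hYt
      obtain ⟨i₀, hi₀⟩ := hAt
      obtain ⟨i, hti, hti1⟩ := mixRun hc hi₀ hj₀
      exact bull_contra hB
        (aneC hc hu₁A i)
        (neFOk hu₁F hOkt)
        (aneC hc hu₁A (i + 1))
        hbd
        (fun e => hyt (by rw [e]; exact hyY (i + 1)))
        hu₁y (hyY i) hti.symm (hyY (i + 1)) (cadj hc i)
        (hu₁A i)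
        (noadjFOk hu₁F hOkt)
        (hu₁A (i + 1))
        hyt
        hti1

lemma key4 (hc : IsInducedC5 G c) (hB : BullFree G) (hx0 : ∀ i, ¬G.Adj x (c i))
    {v y₀ u₀ : V} (hvY : ∀ i, G.Adj v (c i)) (hy₀F : ¬Fcomp G c x y₀)
    (hu₀F : Fcomp G c x u₀) (hu₀y : G.Adj u₀ y₀) (hy₀v : ¬G.Adj y₀ v)
    (hvNF : ¬NFr G c x v) (hy₀Y : ∀ i, G.Adj y₀ (c i)) :
    ∀ n (p : ℕ → V), WalkP G c x n p → G.Adj v (p n) := by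
  have hy₀NF : NFr G c x y₀ := ⟨hy₀F, u₀, hu₀F, hu₀y⟩
  have hvB : BadY G c x v := ⟨hvY, y₀, hy₀NF, hy₀v⟩
  have hvF : ¬Fcomp G c x v := fun h => Fcomp_anti hx0 h 0 (hvY 0)
  intro n
  induction n with
  | zero => intro p hw; rw [hw.1]; exact hvY 0
  | succ m ihm =>
    intro p hw
    have hwm : WalkP G c x m p :=
      ⟨hw.1, fun k hk => hw.2.1 k (by omega), fun k hk => hw.2.2 k (by omega)⟩
    have hpm : G.Adj v (p m) := ihm p hwm
    by_contra hvt
    exact bull_contra hB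
      (neFOk hu₀F (hw.2.2 m (by omega)))
      (fun e => Fcomp_anti hx0 hu₀F 0 (by rw [e]; exact hvY 0))
      (neFOk hu₀F (hw.2.2 (m + 1) le_rfl))
      (fun e => hvNF (by rw [← e]; exact hy₀NF))
      (fun e => (hw.2.2 (m + 1) le_rfl).2.2 (by rw [← e]; exact hvB))
      hu₀y
      (key3 hc hB hx0 hu₀F hu₀y hy₀F hy₀Y m p hwm)
      hpm.symm
      (key3 hc hB hx0 hu₀F hu₀y hy₀F hy₀Y (m + 1) p hw)
      (hw.2.1 m (by omega))
      (noadjFOk hu₀F (hw.2.2 m (by omega)))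
      (fun h => hvNF ⟨hvF, u₀, hu₀F, h⟩)
      (noadjFOk hu₀F (hw.2.2 (m + 1) le_rfl))
      hy₀v
      hvt

end MainDefs

theorem stmt7 (G : SimpleGraph V) [DecidableRel G.Adj]
    (hP : P6Free G) (hB : BullFree G) (hPr : IsPrimeGraph G)
    (c : Fin 5 → V) (hc : IsInducedC5 G c)
    (x : V) (hx : x ∉ Set.range c) (hx0 : ∀ i : Fin 5, ¬ G.Adj x (c i)) :
    ∃ d : V, G.Adj x d ∧ nbrCount G c d = 2 ∧
      ∃ i : Fin 5, G.Adj d (c i) ∧ G.Adj d (c (i + 3)) ∧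
        ∀ j : Fin 5, j ≠ i → j ≠ i + 3 → ¬ G.Adj d (c j) := by
  classical
  by_cases hZ : ∃ z u, Fcomp G c x u ∧ G.Adj u z ∧
      ∃ i, G.Adj z (c i) ∧ G.Adj z (c (i + 3)) ∧
        ∀ j, j ≠ i → j ≠ i + 3 → ¬G.Adj z (c j)
  · obtain ⟨z, u, huF, huz, i, hi1, hi2, hi3⟩ := hZ
    have prop : ∀ v, Fcomp G c x v → G.Adj z v → G.Adj z x := by
      intro v hv
      induction hv with
      | refl => exact fun h => h
      | @tail b v' hxb hbv ihb =>
        intro hzv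
        apply ihb
        by_contra hzb
        have hbA : ∀ k, ¬G.Adj b (c k) := Fcomp_anti hx0 hxb
        have hvA : ∀ k, ¬G.Adj v' (c k) := hbv.2
        exact p6_contra hP (a := b) (b := v') (c := z) (d := c i) (e := c (i + 1))
          (f := c (i + 2))
          hbv.1 hzv.symm hi1 (cadj hc i)
          (by have h := cadj hc (i + 1)
              rwa [((by decide : ∀ k : Fin 5, k + 1 + 1 = k + 2) i)] at h)
          (fun h => hzb h.symm) (hbA i) (hbA (i + 1)) (hbA (i + 2))
          (hvA i) (hvA (i + 1)) (hvA (i + 2))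
          (hi3 (i + 1) ((by decide : ∀ k : Fin 5, k + 1 ≠ k) i)
            ((by decide : ∀ k : Fin 5, k + 1 ≠ k + 3) i))
          (hi3 (i + 2) ((by decide : ∀ k : Fin 5, k + 2 ≠ k) i)
            ((by decide : ∀ k : Fin 5, k + 2 ≠ k + 3) i))
          (cnadj hc ((by decide : ∀ k : Fin 5, k + 2 ≠ k + 1) i)
            ((by decide : ∀ k : Fin 5, k ≠ (k + 2) + 1) i))
          (fun e => hbA i (by rw [e]; exact hi1))
          (aneC hc hbA i) (aneC hc hbA (i + 1)) (aneC hc hbA (i + 2))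
          (aneC hc hvA i) (aneC hc hvA (i + 1)) (aneC hc hvA (i + 2))
          (fun e => cnadj hc ((by decide : ∀ k : Fin 5, k + 3 ≠ (k + 1) + 1) i)
            ((by decide : ∀ k : Fin 5, k + 1 ≠ (k + 3) + 1) i) (by rw [← e]; exact hi2))
          (fun e => cnadj hc ((by decide : ∀ k : Fin 5, k ≠ (k + 2) + 1) i)
            ((by decide : ∀ k : Fin 5, k + 2 ≠ k + 1) i) (by rw [← e]; exact hi1))
          (cne hc ((by decide : ∀ k : Fin 5, k ≠ k + 2) i))
    have hxz : G.Adj x z := (prop u huF huz.symm).symm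
    refine ⟨z, hxz, ?_, i, hi1, hi2, hi3⟩
    have hset : (Finset.univ.filter fun j : Fin 5 => G.Adj z (c j)) = {i, i + 3} := by
      ext j
      simp only [Finset.mem_filter, Finset.mem_univ, true_and, Finset.mem_insert,
        Finset.mem_singleton]
      constructor
      · intro hadj
        by_contra hcon
        push_neg at hcon
        exact hi3 j hcon.1 hcon.2 hadj
      · rintro (rfl | rfl)
        · exact hi1
        · exact hi2
    show (Finset.univ.filter fun j : Fin 5 => G.Adj z (c j)).card = 2
    rw [hset, Finset.card_insert_of_notMem
      (by simpa using (by decide : ∀ k : Fin 5, k ≠ k + 3) i), Finset.card_singleton]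
  · exfalso
    have hN1 : ∀ y, NFr G c x y → ∀ i, G.Adj y (c i) := by
      intro y hy
      obtain ⟨hyF, u, huF, huy⟩ := hy
      rcases classifyC hc hB hP (Fcomp_anti hx0 huF) huy with hA | hY | hT
      · exact absurd (huF.tail ⟨huy, hA⟩) hyF
      · exact hY
      · exact absurd ⟨y, u, huF, huy, hT⟩ hZ
    have okC : ∀ i, OkV G c x (c i) := by
      intro i
      refine ⟨?_, ?_, ?_⟩
      · intro h; exact Fcomp_anti hx0 h (i + 1) (cadj hc i)
      · rintro ⟨-, u, huF, hadj⟩; exact Fcomp_anti hx0 huF i hadj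
      · rintro ⟨hY, -⟩; exact G.irrefl (hY i)
    set S : Set V := {t | ∃ n p, WalkP G c x n p ∧ p n = t} with hSdef
    have hSOk : ∀ t ∈ S, OkV G c x t := by
      rintro t ⟨n, p, hw, he⟩; rw [← he]; exact hw.2.2 n le_rfl
    have hextS : ∀ t ∈ S, ∀ w, G.Adj t w → OkV G c x w → w ∈ S := by
      rintro t ⟨n, p, hw, he⟩ w hadj hok
      refine ⟨n + 1, fun k => if k ≤ n then p k else w, ⟨?_, ?_, ?_⟩, ?_⟩
      · show (if 0 ≤ n then p 0 else w) = c 0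
        rw [if_pos (Nat.zero_le n)]; exact hw.1
      · intro k hk
        show G.Adj (if k ≤ n then p k else w) (if k + 1 ≤ n then p (k + 1) else w)
        by_cases h1 : k < n
        · rw [if_pos (by omega : k ≤ n), if_pos (by omega : k + 1 ≤ n)]
          exact hw.2.1 k h1
        · have hkn : k = n := by omega
          subst hkn
          rw [if_pos le_rfl, if_neg (by omega)]
          rw [he]; exact hadj
      · intro k hk
        show OkV G c x (if k ≤ n then p k else w)
        by_cases h1 : k ≤ n
        · rw [if_pos h1]; exact hw.2.2 k h1
        · rw [if_neg h1]; exact hok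
      · show (if n + 1 ≤ n then p (n + 1) else w) = w
        rw [if_neg (by omega)]
    have hc0S : c 0 ∈ S :=
      ⟨0, fun _ => c 0, ⟨rfl, fun k hk => absurd hk (by omega), fun k _ => okC 0⟩, rfl⟩
    have hc1S : c 1 ∈ S := hextS (c 0) hc0S (c 1) (cadj hc 0) (okC 1)
    apply hPr
    refine ⟨S, ?_, ⟨c 0, hc0S, c 1, hc1S, cne hc (by decide)⟩, ?_⟩
    · intro v hv
      by_cases hvF : Fcomp G c x v
      · right; intro s hs
        exact noadjFOk hvF (hSOk s hs)
      by_cases hvNF : NFr G c x v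
      · left; intro s hs
        obtain ⟨n, p, hw, he⟩ := hs
        obtain ⟨hvF', u₁, hu₁F, hu₁v⟩ := hvNF
        rw [← he]
        exact key3 hc hB hx0 hu₁F hu₁v hvF' (hN1 v ⟨hvF', u₁, hu₁F, hu₁v⟩) n p hw
      by_cases hvB : BadY G c x v
      · left; intro s hs
        obtain ⟨n, p, hw, he⟩ := hs
        obtain ⟨hvY, y₀, hy₀NF, hy₀v⟩ := hvB
        obtain ⟨hy₀F, u₀, hu₀F, hu₀y⟩ := hy₀NF
        rw [← he]
        exact key4 hc hB hx0 hvY hy₀F hu₀F hu₀y hy₀v hvNF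
          (hN1 y₀ ⟨hy₀F, u₀, hu₀F, hu₀y⟩) n p hw
      · right; intro s hs hadj
        exact hv (hextS s hs v hadj.symm ⟨hvF, hvNF, hvB⟩)
    · intro he
      have hxS : x ∈ S := he ▸ Set.mem_univ x
      exact (hSOk x hxS).1 Relation.ReflTransGen.refl
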